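/- Fix θ ∈ (0,1) and x ∈ (0, 1/2). For each n ≥ 1 let aₙ = 1 − θ/n and zₙ = (1 − aₙ)²/aₙ². Let (kₙ) be a sequence of integers with 1 ≤ kₙ ≤ n − 1 and kₙ/n → x as n → ∞. Then Σ_{γ=1}^{kₙ} zₙ^{γ−1} · C(kₙ−1, γ−1) · C(n−kₙ−1, γ−1) converges as n → ∞ to I₀(2θ√(x(1−x))), where C denotes the binomial coefficient. (This sum equals the terminating hypergeometric value ₂F₁(−(kₙ−1), −(n−kₙ−1); 1; zₙ).) -/

import Mathlib

open scoped BigOperators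

/-- The modified Bessel function `I₀(z) = Σ_{n=0}^∞ (z/2)^{2n}/(n!)²`. -/
noncomputable def besselI0 (z : ℝ) : ℝ :=
  ∑' n : ℕ, (z / 2) ^ (2 * n) / ((Nat.factorial n : ℝ)) ^ 2

lemma choose_cast_eq (a m : ℕ) :
    (Nat.choose a m : ℝ) = (∏ i ∈ Finset.range m, ((a - i : ℕ) : ℝ)) / (Nat.factorial m : ℝ) := by
  rw [eq_div_iff (by exact_mod_cast (Nat.factorial_ne_zero m))]
  rw [← Nat.cast_prod, ← Nat.descFactorial_eq_prod_range, Nat.descFactorial_eq_factorial_mul_choose]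
  push_cast; ring

lemma prod_form (z : ℝ) (a b m : ℕ) :
    z ^ m * (Nat.choose a m : ℝ) * (Nat.choose b m : ℝ)
      = (∏ i ∈ Finset.range m, z * ((a - i : ℕ) : ℝ) * ((b - i : ℕ) : ℝ))
          / (Nat.factorial m : ℝ) ^ 2 := by
  rw [choose_cast_eq, choose_cast_eq]
  rw [show (∏ i ∈ Finset.range m, z * ((a - i : ℕ) : ℝ) * ((b - i : ℕ) : ℝ))
      = (∏ _i ∈ Finset.range m, z) * (∏ i ∈ Finset.range m, ((a - i : ℕ) : ℝ))
        * (∏ i ∈ Finset.range m, ((b - i : ℕ) : ℝ)) by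
    rw [← Finset.prod_mul_distrib, ← Finset.prod_mul_distrib]]
  rw [Finset.prod_const, Finset.card_range]
  ring

open Filter Topology in
/-- Lemma 8 (first part): with `aₙ = 1 − θ/n`, `zₙ = (1−aₙ)²/aₙ²` and `kₙ/n → x ∈ (0,1/2)`,
`Σ_{γ=1}^{kₙ} zₙ^{γ−1} C(kₙ−1,γ−1) C(n−kₙ−1,γ−1) → I₀(2θ√(x(1−x)))` as `n → ∞`
(the sum equals `₂F₁(−(kₙ−1), −(n−kₙ−1); 1; zₙ)`). -/
theorem hypergeom_limit_one (θ : ℝ) (hθ : 0 < θ) (hθ1 : θ < 1)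
    (x : ℝ) (hx : 0 < x) (hx2 : x < 1 / 2) (k : ℕ → ℕ)
    (hk : ∀ n : ℕ, 2 ≤ n → 1 ≤ k n ∧ k n ≤ n - 1)
    (hkx : Tendsto (fun n : ℕ => (k n : ℝ) / n) atTop (𝓝 x)) :
    Tendsto (fun n : ℕ =>
        ∑ γ ∈ Finset.Icc 1 (k n),
          ((1 - (1 - θ / n)) ^ 2 / (1 - θ / n) ^ 2) ^ (γ - 1)
            * (Nat.choose (k n - 1) (γ - 1) : ℝ) * (Nat.choose (n - k n - 1) (γ - 1) : ℝ))
      atTop (𝓝 (besselI0 (2 * θ * Real.sqrt (x * (1 - x))))) := by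
  have hxx : (0:ℝ) ≤ x * (1 - x) := by nlinarith
  set c : ℝ := 2 * θ * Real.sqrt (x * (1 - x)) with hc
  set F : ℕ → ℕ → ℝ := fun n m =>
    ((θ / n) ^ 2 / (1 - θ / n) ^ 2) ^ m * (Nat.choose (k n - 1) m : ℝ)
      * (Nat.choose (n - k n - 1) m : ℝ) with hF
  have hN : Tendsto (fun n : ℕ => (n : ℝ)) atTop atTop := tendsto_natCast_atTop_atTop
  -- k n → ∞
  have hktop : Tendsto k atTop atTop := by
    rw [← tendsto_natCast_atTop_iff (R := ℝ)]
    apply Filter.Tendsto.congr' _ (Filter.Tendsto.pos_mul_atTop hx hkx hN)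
    filter_upwards [eventually_gt_atTop 0] with n hn
    have hn0 : (n:ℝ) ≠ 0 := by positivity
    field_simp
  -- n - k n → ∞
  have hnktop : Tendsto (fun n => n - k n) atTop atTop := by
    rw [← tendsto_natCast_atTop_iff (R := ℝ)]
    have h1 : Tendsto (fun n : ℕ => 1 - (k n : ℝ) / n) atTop (𝓝 (1 - x)) :=
      tendsto_const_nhds.sub hkx
    apply Filter.Tendsto.congr' _ (Filter.Tendsto.pos_mul_atTop (by linarith) h1 hN)
    filter_upwards [eventually_ge_atTop 2] with n hn
    have hkn : k n ≤ n := le_trans (hk n hn).2 (Nat.sub_le n 1)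
    have hn0 : (n:ℝ) ≠ 0 := by positivity
    rw [Nat.cast_sub hkn]
    field_simp
  have hz : Tendsto (fun n : ℕ => θ / (n:ℝ)) atTop (𝓝 0) :=
    tendsto_const_div_atTop_nhds_zero_nat θ
  -- per-factor limit
  have hfactor : ∀ i : ℕ, Tendsto (fun n : ℕ =>
      ((θ/(n:ℝ))^2/(1-θ/n)^2) * ((k n - 1 - i : ℕ):ℝ) * ((n - k n - 1 - i : ℕ):ℝ)) atTop
      (𝓝 (θ^2 * (x * (1-x)))) := by
    intro i
    have key : Tendsto (fun n : ℕ =>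
        (θ^2/(1-θ/(n:ℝ))^2) * ((k n:ℝ) - (1+i)) / n * (((n:ℝ) - k n - (1+i)) / n)) atTop
        (𝓝 (θ^2 * (x * (1-x)))) := by
      have e1 : Tendsto (fun n : ℕ => θ^2/(1-θ/(n:ℝ))^2) atTop (𝓝 (θ^2)) := by
        have := (tendsto_const_nhds (x := (1:ℝ)) (f := atTop (α := ℕ))).sub hz
        have h2 : Tendsto (fun n : ℕ => (1-θ/(n:ℝ))^2) atTop (𝓝 1) := by
          simpa using this.pow 2
        have h3 := (tendsto_const_nhds (x := θ^2)).div h2 one_ne_zero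
        rw [div_one] at h3
        exact h3
      have e2 : Tendsto (fun n : ℕ => ((k n:ℝ) - (1+i)) / n) atTop (𝓝 x) := by
        have : Tendsto (fun n : ℕ => (k n:ℝ)/n - (1+i)/n) atTop (𝓝 (x - 0)) :=
          hkx.sub (tendsto_const_div_atTop_nhds_zero_nat ((1:ℝ)+i))
        rw [sub_zero] at this
        apply this.congr
        intro n; ring
      have e3 : Tendsto (fun n : ℕ => ((n:ℝ) - k n - (1+i)) / n) atTop (𝓝 (1 - x)) := by
        have : Tendsto (fun n : ℕ => (n:ℝ)/n - (k n:ℝ)/n - (1+i)/n) atTop (𝓝 (1 - x - 0)) := by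
          refine Tendsto.sub (Tendsto.sub ?_ hkx) (tendsto_const_div_atTop_nhds_zero_nat ((1:ℝ)+i))
          apply Filter.Tendsto.congr' _ (tendsto_const_nhds (x := (1:ℝ)))
          filter_upwards [eventually_gt_atTop 0] with n hn
          have hn0 : (n:ℝ) ≠ 0 := by positivity
          field_simp
        rw [sub_zero] at this
        apply this.congr
        intro n; ring
      have := (e1.mul e2).mul e3
      simpa [mul_div_assoc, mul_assoc] using this
    apply Filter.Tendsto.congr' _ key
    filter_upwards [hktop.eventually_ge_atTop (2+i), hnktop.eventually_ge_atTop (2+i),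
      eventually_ge_atTop 2] with n h1 h2 h3
    have hkn : k n ≤ n := le_trans (hk n h3).2 (Nat.sub_le n 1)
    have ha : k n - 1 - i = k n - (1+i) := by omega
    have hb : n - k n - 1 - i = n - (k n + (1+i)) := by omega
    have ha' : 1 + i ≤ k n := by omega
    have hb' : k n + (1+i) ≤ n := by omega
    rw [ha, hb, Nat.cast_sub ha', Nat.cast_sub hb']
    push_cast
    ring
  -- per-m limit
  have hab : ∀ m : ℕ, Tendsto (fun n => F n m) atTop
      (𝓝 ((c/2)^(2*m) / (Nat.factorial m:ℝ)^2)) := by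
    intro m
    have hprod : Tendsto (fun n : ℕ => ∏ i ∈ Finset.range m,
        (((θ/(n:ℝ))^2/(1-θ/n)^2) * ((k n - 1 - i : ℕ):ℝ) * ((n - k n - 1 - i : ℕ):ℝ))) atTop
        (𝓝 (∏ _i ∈ Finset.range m, θ^2*(x*(1-x)))) :=
      tendsto_finset_prod _ (fun i _ => hfactor i)
    have h2 : (c/2)^(2*m) = ∏ _i ∈ Finset.range m, θ^2*(x*(1-x)) := by
      rw [Finset.prod_const, Finset.card_range, pow_mul]
      congr 1
      have h : c / 2 = θ * Real.sqrt (x*(1-x)) := by rw [hc]; ring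
      rw [h, mul_pow, Real.sq_sqrt hxx]
    rw [h2]
    apply Filter.Tendsto.congr _ (hprod.div_const _)
    intro n
    exact (prod_form _ _ _ m).symm
  -- uniform bound
  have hbound : ∀ᶠ n in atTop, ∀ m, ‖F n m‖ ≤ (2*θ)^(2*m) / (Nat.factorial m:ℝ)^2 := by
    filter_upwards [eventually_ge_atTop 2] with n hn m
    have hn2 : (2:ℝ) ≤ n := by exact_mod_cast hn
    have hn0 : (0:ℝ) < n := by linarith
    have hD : (1/2:ℝ) ≤ 1 - θ/n := by
      have : θ/n ≤ 1/2 := by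
        rw [div_le_iff₀ hn0]; nlinarith
      linarith
    have hzn : (θ/(n:ℝ))^2/(1-θ/n)^2 ≤ 4*(θ/n)^2 := by
      have h1 : (θ/(n:ℝ))^2/(1-θ/n)^2 ≤ (θ/(n:ℝ))^2/(1/4) := by
        apply div_le_div_of_nonneg_left (by positivity) (by norm_num)
        nlinarith
      calc (θ/(n:ℝ))^2/(1-θ/n)^2 ≤ (θ/(n:ℝ))^2/(1/4) := h1
        _ = 4*(θ/n)^2 := by ring
    have hFnn : 0 ≤ F n m := by rw [hF]; positivity
    rw [Real.norm_eq_abs, abs_of_nonneg hFnn, hF]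
    simp only
    rw [prod_form]
    have key : ∏ i ∈ Finset.range m,
        (((θ/(n:ℝ))^2/(1-θ/n)^2) * ((k n - 1 - i : ℕ):ℝ) * ((n - k n - 1 - i : ℕ):ℝ))
        ≤ (2*θ)^(2*m) := by
      calc ∏ i ∈ Finset.range m,
            (((θ/(n:ℝ))^2/(1-θ/n)^2) * ((k n - 1 - i : ℕ):ℝ) * ((n - k n - 1 - i : ℕ):ℝ))
          ≤ ∏ _i ∈ Finset.range m, (2*θ)^2 := by
            apply Finset.prod_le_prod
            · intro i _; positivity
            · intro i _
              have hA : ((k n - 1 - i : ℕ):ℝ) ≤ n := by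
                have : k n - 1 - i ≤ n := by have := (hk n hn).2; omega
                exact_mod_cast this
              have hB : ((n - k n - 1 - i : ℕ):ℝ) ≤ n := by
                have : n - k n - 1 - i ≤ n := by omega
                exact_mod_cast this
              have hA0 : (0:ℝ) ≤ ((k n - 1 - i : ℕ):ℝ) := by positivity
              have hB0 : (0:ℝ) ≤ ((n - k n - 1 - i : ℕ):ℝ) := by positivity
              calc ((θ/(n:ℝ))^2/(1-θ/n)^2) * ((k n - 1 - i : ℕ):ℝ) * ((n - k n - 1 - i : ℕ):ℝ)
                  ≤ (4*(θ/n)^2) * (n:ℝ) * (n:ℝ) := by gcongr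
                _ = (2*θ)^2 := by field_simp; ring
        _ = (2*θ)^(2*m) := by rw [Finset.prod_const, Finset.card_range, ← pow_mul]
    gcongr
  -- summability of the bound
  have hsum : Summable (fun m : ℕ => (2*θ)^(2*m) / (Nat.factorial m:ℝ)^2) := by
    apply Summable.of_nonneg_of_le (fun m => by positivity) _
      (Real.summable_pow_div_factorial ((2*θ)^2))
    intro m
    rw [pow_mul]
    have h1' : 1 ≤ Nat.factorial m := Nat.one_le_iff_ne_zero.mpr (Nat.factorial_ne_zero m)
    have h1 : (1:ℝ) ≤ (Nat.factorial m : ℝ) := by exact_mod_cast h1'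
    exact div_le_div_of_nonneg_left (by positivity) (by positivity) (by nlinarith)
  have hmain := tendsto_tsum_of_dominated_convergence hsum hab hbound
  rw [show besselI0 c = ∑' m, (c/2)^(2*m)/(Nat.factorial m:ℝ)^2 from rfl]
  apply Filter.Tendsto.congr' _ hmain
  filter_upwards [eventually_ge_atTop 2] with n hn
  have hk1 : 1 ≤ k n := (hk n hn).1
  rw [tsum_eq_sum (s := Finset.range (k n)) (f := fun m => F n m) ?_]
  · simp only [sub_sub_cancel]
    rw [← Finset.Ico_add_one_right_eq_Icc, Finset.sum_Ico_eq_sum_range]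
    simp only [Nat.add_sub_cancel, Nat.add_sub_cancel_left]
    rfl
  · intro m hm
    simp only [Finset.mem_range, not_lt] at hm
    have : k n - 1 < m := by omega
    rw [hF]
    simp [Nat.choose_eq_zero_of_lt this]
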